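/- Let (Σ,M) be an OP alphabet and K a commutative semiring. If S,T:(Σ,M)^+→K are regular (respectively strictly regular) series, then their pointwise (Hadamard) product S⊙T, defined by (S⊙T)(w)=S(w)·T(w), is regular (respectively strictly regular). -/

import Mathlib

namespace WOP

/-- Precedence relations: yields precedence, equal in precedence, takes precedence. -/
inductive PrecRel where
  | lt | eq | gt
deriving DecidableEq

/-- An operator precedence matrix on `Σ ∪ {#}`, where `none` encodes `#`.
It assigns at most one precedence relation to each ordered pair, with
`# ⋖ a` and `a ⋗ #` for every letter `a`. -/
structure OPM (A : Type) where
  rel : Option A → Option A → Option PrecRel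
  hash_lt : ∀ a : A, rel none (some a) = some .lt
  hash_gt : ∀ a : A, rel (some a) none = some .gt

variable {A B K : Type}

/-- The letter of `#w#` at position `i` (positions `0` and `> |w|` carry `#`, i.e. `none`). -/
def letterAt (w : List A) (i : ℕ) : Option A :=
  if i = 0 then none else w[i - 1]?

section ChainRel

variable (M : OPM A) (L : ℕ → Option A)

mutual
  /-- `ChainMid M L k j`: there are `k = k_s < ... < k_m = j` with
  `L k_s ≐ L k_{s+1} ≐ ... ≐ L k_{m-1} ⋗ L k_m` and the gap condition between
  consecutive elements. -/
  inductive ChainMid : ℕ → ℕ → Prop where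
    | last {k j : ℕ} : M.rel (L k) (L j) = some .gt → ChainGap k j → ChainMid k j
    | step {k k' j : ℕ} : M.rel (L k) (L k') = some .eq → ChainGap k k' →
        ChainMid k' j → ChainMid k j

  /-- The gap condition between consecutive elements of a chain:
  adjacent positions or a chain. -/
  inductive ChainGap : ℕ → ℕ → Prop where
    | adj (k : ℕ) : ChainGap k (k + 1)
    | chain {k k' : ℕ} : Chain k k' → ChainGap k k'

  /-- The chain relation `i ⤳ j`: there are positions `i = k_1 < ... < k_m = j` with
  `L k_1 ⋖ L k_2 ≐ ... ≐ L k_{m-1} ⋗ L k_m` such that consecutive `k`'s are adjacent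
  or themselves related by `⤳`. -/
  inductive Chain : ℕ → ℕ → Prop where
    | mk {i k j : ℕ} : M.rel (L i) (L k) = some .lt → ChainGap i k → ChainMid k j →
        Chain i j
end

end ChainRel

/-- `(Σ,M)^+`: the set of nonempty words compatible with `M`, i.e. `0 ⤳ |w|+1` in `#w#`. -/
def OPWords (M : OPM A) : Set (List A) :=
  {w | w ≠ [] ∧ Chain M (letterAt w) 0 (w.length + 1)}

/-- An (unweighted) operator precedence automaton over the alphabet `A`. -/
structure OPA (A : Type) where
  Q : Type
  fin : Fintype Q
  I : Set Q
  F : Set Q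
  δpush : Set (Q × A × Q)
  δshift : Set (Q × A × Q)
  δpop : Set (Q × Q × Q)

/-- A weighted operator precedence automaton over the alphabet `A` and weights in `K`. -/
structure WOPA (A K : Type) extends OPA A where
  wtpush : Q × A × Q → K
  wtshift : Q × A × Q → K
  wtpop : Q × Q × Q → K

/-- A configuration: a stack of (symbol, state) pairs, a current state,
and the remaining input. -/
structure Config (A Q : Type) where
  stack : List (A × Q)
  state : Q
  input : List A

/-- The moves (transitions) an OPA may take. -/
inductive Move (A Q : Type) where
  | push (q : Q) (b : A) (r : Q)
  | shift (q : Q) (b : A) (r : Q)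
  | pop (q p r : Q)

/-- The topmost stack symbol (`none` = `#` for the empty stack). -/
def topSym {Q : Type} (st : List (A × Q)) : Option A := st.head?.map Prod.fst

/-- One step of an OPA on an OP alphabet `(A, M)`. -/
inductive Exec (M : OPM A) (T : OPA A) : Config A T.Q → Move A T.Q → Config A T.Q → Prop where
  | push {st : List (A × T.Q)} {q r : T.Q} {b : A} {x : List A} :
      M.rel (topSym st) (some b) = some .lt → (q, b, r) ∈ T.δpush →
      Exec M T ⟨st, q, b :: x⟩ (.push q b r) ⟨(b, q) :: st, r, x⟩
  | shift {st : List (A × T.Q)} {p q r : T.Q} {a b : A} {x : List A} :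
      M.rel (some a) (some b) = some .eq → (q, b, r) ∈ T.δshift →
      Exec M T ⟨(a, p) :: st, q, b :: x⟩ (.shift q b r) ⟨(b, p) :: st, r, x⟩
  | pop {st : List (A × T.Q)} {p q r : T.Q} {a : A} {x : List A} :
      M.rel (some a) x.head? = some .gt → (q, p, r) ∈ T.δpop →
      Exec M T ⟨(a, p) :: st, q, x⟩ (.pop q p r) ⟨st, r, x⟩

/-- Execution of a sequence of moves. -/
inductive ExecList (M : OPM A) (T : OPA A) :
    Config A T.Q → List (Move A T.Q) → Config A T.Q → Prop where
  | nil (c : Config A T.Q) : ExecList M T c [] c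
  | cons {c c' c'' : Config A T.Q} {m : Move A T.Q} {ms : List (Move A T.Q)} :
      Exec M T c m c' → ExecList M T c' ms c'' → ExecList M T c (m :: ms) c''

/-- The weight of a move of a weighted OPA. -/
def moveWt [Semiring K] (W : WOPA A K) : Move A W.Q → K
  | .push q b r => W.wtpush (q, b, r)
  | .shift q b r => W.wtshift (q, b, r)
  | .pop q p r => W.wtpop (q, p, r)

/-- The accepting runs of an OPA on `w`: an initial state, a sequence of moves from the
initial configuration (empty stack, whole input) to a final configuration
(empty stack, input read), and the final state reached. -/
def AccRuns (M : OPM A) (T : OPA A) (w : List A) : Set (T.Q × List (Move A T.Q) × T.Q) :=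
  {ρ | ρ.1 ∈ T.I ∧ ρ.2.2 ∈ T.F ∧ ExecList M T ⟨[], ρ.1, w⟩ ρ.2.1 ⟨[], ρ.2.2, []⟩}

/-- The behavior `⟦W⟧(w)`: the sum over all accepting runs of `W` on `w` of the product
(in order) of the weights of the moves of the run. -/
noncomputable def behavior [Semiring K] (M : OPM A) (W : WOPA A K) (w : List A) : K :=
  ∑ᶠ ρ ∈ AccRuns M W.toOPA w, (ρ.2.1.map (moveWt W)).prod

/-- A weighted OPA is restricted (an rwOPA) if all pop weights are `1`. -/
def Restricted [Semiring K] (W : WOPA A K) : Prop := ∀ t ∈ W.δpop, W.wtpop t = 1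

/-- A series `S : (Σ,M)^+ → K` is regular if it is the behavior of some wOPA. -/
def Regular [Semiring K] (M : OPM A) (S : List A → K) : Prop :=
  ∃ W : WOPA A K, ∀ w ∈ OPWords M, S w = behavior M W w

/-- A series is strictly regular if it is the behavior of some restricted wOPA. -/
def StrictlyRegular [Semiring K] (M : OPM A) (S : List A → K) : Prop :=
  ∃ W : WOPA A K, Restricted W ∧ ∀ w ∈ OPWords M, S w = behavior M W w

/-- Unweighted acceptance. -/
def Accepts (M : OPM A) (T : OPA A) (w : List A) : Prop :=
  ∃ qI ms qF, qI ∈ T.I ∧ qF ∈ T.F ∧ ExecList M T ⟨[], qI, w⟩ ms ⟨[], qF, []⟩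

/-- A language `L ⊆ (Σ,M)^+` is an operator precedence language if it is the set of
compatible words accepted by some OPA. -/
def IsOPL (M : OPM A) (L : Set (List A)) : Prop :=
  ∃ T : OPA A, L = {w | w ∈ OPWords M ∧ Accepts M T w}

/-- The intersection `S ∩ L` of a series with a language. -/
noncomputable def interSeries [Semiring K] (S : List A → K) (L : Set (List A))
    (w : List A) : K :=
  open Classical in if w ∈ L then S w else 0

/-- `h : Σ → Γ` is OPM-preserving: `a ⊙ b` iff `h(a) ⊙ h(b)` for every relation `⊙`. -/
def OPMPreserving (M : OPM A) (M' : OPM B) (h : A → B) : Prop :=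
  ∀ a b : A, M.rel (some a) (some b) = M'.rel (some (h a)) (some (h b))

/-- The image series `h(S)(v) = ∑_{w ∈ (Σ,M)^+, h(w) = v} S(w)`. -/
noncomputable def mapSeries [Semiring K] (M : OPM A) (h : A → B) (S : List A → K)
    (v : List B) : K :=
  ∑ᶠ w ∈ {w | w ∈ OPWords M ∧ w.map h = v}, S w

/-- The pullback OPM `h⁻¹(M)` along `h : Σ' → Σ`. -/
def pullOPM (M : OPM A) (h : B → A) : OPM B where
  rel o₁ o₂ := M.rel (o₁.map h) (o₂.map h)
  hash_lt b := M.hash_lt (h b)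
  hash_gt b := M.hash_gt (h b)

/-- The Nivat class `N(Σ,M,K)`: series obtained from a one-state restricted wOPA over a
pulled-back OP alphabet, intersected with an OPL, followed by the projection. -/
def NivatClass [Semiring K] (M : OPM A) (S : List A → K) : Prop :=
  ∃ (B : Type) (_ : Fintype B) (h : B → A) (W : WOPA B K) (L : Set (List B)),
    Restricted W ∧ (∃ q₀ : W.Q, ∀ q : W.Q, q = q₀) ∧ IsOPL (pullOPM M h) L ∧
    ∀ v ∈ OPWords M,
      S v = mapSeries (pullOPM M h) h (interSeries (behavior (pullOPM M h) W) L) v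

/-- An OPL step function: a finite sum `∑ kᵢ · 1_{Lᵢ}` with the `Lᵢ` OPLs forming a
partition of `(Σ,M)^+`. -/
def IsOPLStep [Semiring K] (M : OPM A) (S : List A → K) : Prop :=
  ∃ (n : ℕ) (k : Fin n → K) (L : Fin n → Set (List A)),
    (∀ i, IsOPL M (L i)) ∧ (∀ i j, i ≠ j → Disjoint (L i) (L j)) ∧
    (⋃ i, L i) = OPWords M ∧ ∀ i, ∀ w ∈ L i, S w = k i




/-! ### Auxiliary development for the Hadamard product -/

section Hadamard

variable {Q1 Q2 : Type}

/-- First projection of a move of a product automaton. -/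
def mproj1 : Move A (Q1 × Q2) → Move A Q1
  | .push q b r => .push q.1 b r.1
  | .shift q b r => .shift q.1 b r.1
  | .pop q p r => .pop q.1 p.1 r.1

/-- Second projection of a move of a product automaton. -/
def mproj2 : Move A (Q1 × Q2) → Move A Q2
  | .push q b r => .push q.2 b r.2
  | .shift q b r => .shift q.2 b r.2
  | .pop q p r => .pop q.2 p.2 r.2

/-- First projection of a stack of a product automaton. -/
def sproj1 : List (A × (Q1 × Q2)) → List (A × Q1) :=
  List.map (fun p => (p.1, p.2.1))

/-- Second projection of a stack of a product automaton. -/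
def sproj2 : List (A × (Q1 × Q2)) → List (A × Q2) :=
  List.map (fun p => (p.1, p.2.2))

lemma topSym_sproj1 (st : List (A × (Q1 × Q2))) : topSym (sproj1 st) = topSym st := by
  cases st <;> rfl

lemma topSym_sproj2 (st : List (A × (Q1 × Q2))) : topSym (sproj2 st) = topSym st := by
  cases st <;> rfl

/-- The product of two weighted OPAs, computing the Hadamard product of the behaviors. -/
@[reducible]
def prodWOPA (W1 W2 : WOPA A K) [Mul K] : WOPA A K where
  Q := W1.Q × W2.Q
  fin := @instFintypeProd _ _ W1.fin W2.fin
  I := {q | q.1 ∈ W1.I ∧ q.2 ∈ W2.I}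
  F := {q | q.1 ∈ W1.F ∧ q.2 ∈ W2.F}
  δpush := {t | (t.1.1, t.2.1, t.2.2.1) ∈ W1.δpush ∧ (t.1.2, t.2.1, t.2.2.2) ∈ W2.δpush}
  δshift := {t | (t.1.1, t.2.1, t.2.2.1) ∈ W1.δshift ∧ (t.1.2, t.2.1, t.2.2.2) ∈ W2.δshift}
  δpop := {t | (t.1.1, t.2.1.1, t.2.2.1) ∈ W1.δpop ∧ (t.1.2, t.2.1.2, t.2.2.2) ∈ W2.δpop}
  wtpush t := W1.wtpush (t.1.1, t.2.1, t.2.2.1) * W2.wtpush (t.1.2, t.2.1, t.2.2.2)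
  wtshift t := W1.wtshift (t.1.1, t.2.1, t.2.2.1) * W2.wtshift (t.1.2, t.2.1, t.2.2.2)
  wtpop t := W1.wtpop (t.1.1, t.2.1.1, t.2.2.1) * W2.wtpop (t.1.2, t.2.1.2, t.2.2.2)

variable [CommSemiring K]

lemma prod_restricted {W1 W2 : WOPA A K} (h1 : Restricted W1) (h2 : Restricted W2) :
    Restricted (prodWOPA W1 W2) := by
  rintro ⟨q, p, r⟩ ht
  show W1.wtpop (q.1, p.1, r.1) * W2.wtpop (q.2, p.2, r.2) = 1
  rw [h1 _ ht.1, h2 _ ht.2, mul_one]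

lemma moveWt_prod (W1 W2 : WOPA A K) (m : Move A (W1.Q × W2.Q)) :
    moveWt (prodWOPA W1 W2) m = moveWt W1 (mproj1 m) * moveWt W2 (mproj2 m) := by
  cases m <;> rfl

lemma wt_split (W1 W2 : WOPA A K) (ms : List (Move A (W1.Q × W2.Q))) :
    ((ms.map (moveWt (prodWOPA W1 W2)))).prod
      = ((ms.map mproj1).map (moveWt W1)).prod * ((ms.map mproj2).map (moveWt W2)).prod := by
  induction ms with
  | nil => simp
  | cons m ms ih =>
      simp only [List.map_cons, List.prod_cons, ih, moveWt_prod]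
      ring

lemma split_exec1 {M : OPM A} {W1 W2 : WOPA A K} {c c' : Config A (prodWOPA W1 W2).Q}
    {m : Move A (prodWOPA W1 W2).Q} (h : Exec M (prodWOPA W1 W2).toOPA c m c') :
    Exec M W1.toOPA ⟨sproj1 c.stack, c.state.1, c.input⟩ (mproj1 m)
      ⟨sproj1 c'.stack, c'.state.1, c'.input⟩ := by
  cases h with
  | push hrel hmem =>
      exact Exec.push (by rwa [topSym_sproj1]) hmem.1
  | shift hrel hmem => exact Exec.shift hrel hmem.1
  | pop hrel hmem => exact Exec.pop hrel hmem.1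

lemma split_exec2 {M : OPM A} {W1 W2 : WOPA A K} {c c' : Config A (prodWOPA W1 W2).Q}
    {m : Move A (prodWOPA W1 W2).Q} (h : Exec M (prodWOPA W1 W2).toOPA c m c') :
    Exec M W2.toOPA ⟨sproj2 c.stack, c.state.2, c.input⟩ (mproj2 m)
      ⟨sproj2 c'.stack, c'.state.2, c'.input⟩ := by
  cases h with
  | push hrel hmem =>
      exact Exec.push (by rwa [topSym_sproj2]) hmem.2
  | shift hrel hmem => exact Exec.shift hrel hmem.2
  | pop hrel hmem => exact Exec.pop hrel hmem.2

lemma split_run1 {M : OPM A} {W1 W2 : WOPA A K} {c c' : Config A (prodWOPA W1 W2).Q}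
    {ms : List (Move A (prodWOPA W1 W2).Q)} (h : ExecList M (prodWOPA W1 W2).toOPA c ms c') :
    ExecList M W1.toOPA ⟨sproj1 c.stack, c.state.1, c.input⟩ (ms.map mproj1)
      ⟨sproj1 c'.stack, c'.state.1, c'.input⟩ := by
  induction h with
  | nil c => exact ExecList.nil _
  | cons h1 _ ih => exact ExecList.cons (split_exec1 h1) ih

lemma split_run2 {M : OPM A} {W1 W2 : WOPA A K} {c c' : Config A (prodWOPA W1 W2).Q}
    {ms : List (Move A (prodWOPA W1 W2).Q)} (h : ExecList M (prodWOPA W1 W2).toOPA c ms c') :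
    ExecList M W2.toOPA ⟨sproj2 c.stack, c.state.2, c.input⟩ (ms.map mproj2)
      ⟨sproj2 c'.stack, c'.state.2, c'.input⟩ := by
  induction h with
  | nil c => exact ExecList.nil _
  | cons h1 _ ih => exact ExecList.cons (split_exec2 h1) ih

lemma execList_nil_inv {M : OPM A} {T : OPA A} {c c' : Config A T.Q}
    (h : ExecList M T c [] c') : c = c' := by cases h; rfl

lemma execList_cons_inv {M : OPM A} {T : OPA A} {c c'' : Config A T.Q}
    {m : Move A T.Q} {ms : List (Move A T.Q)} (h : ExecList M T c (m :: ms) c'') :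
    ∃ c', Exec M T c m c' ∧ ExecList M T c' ms c'' := by
  cases h with
  | cons h1 h2 => exact ⟨_, h1, h2⟩

lemma no_exec_empty {M : OPM A} {T : OPA A} {q : T.Q} {m : Move A T.Q} {c' : Config A T.Q} :
    ¬ Exec M T ⟨[], q, []⟩ m c' := by
  intro h; cases h

/-- Zipping two runs on the same input into a run of the product automaton. -/
lemma zip_run {M : OPM A} (W1 W2 : WOPA A K) :
    ∀ (ms1 : List (Move A W1.Q)) (ms2 : List (Move A W2.Q))
      (st : List (A × (W1.Q × W2.Q))) (q : W1.Q × W2.Q) (w : List A) (f1 : W1.Q) (f2 : W2.Q),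
      ExecList M W1.toOPA ⟨sproj1 st, q.1, w⟩ ms1 ⟨[], f1, []⟩ →
      ExecList M W2.toOPA ⟨sproj2 st, q.2, w⟩ ms2 ⟨[], f2, []⟩ →
      ∃ ms : List (Move A (W1.Q × W2.Q)),
        ExecList M (prodWOPA W1 W2).toOPA ⟨st, q, w⟩ ms ⟨[], (f1, f2), []⟩ ∧
        ms.map mproj1 = ms1 ∧ ms.map mproj2 = ms2 := by
  intro ms1
  induction ms1 with
  | nil =>
      intro ms2 st q w f1 f2 h1 h2
      have hc := execList_nil_inv h1
      simp only [Config.mk.injEq] at hc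
      obtain ⟨hst, hq1, hw⟩ := hc
      have hst' : st = [] := List.map_eq_nil_iff.mp hst
      subst hst' hw
      cases ms2 with
      | nil =>
          have hc2 := execList_nil_inv h2
          simp only [Config.mk.injEq] at hc2
          refine ⟨[], ?_, rfl, rfl⟩
          have hqq : (f1, f2) = q := Prod.ext hq1.symm hc2.2.1.symm
          rw [hqq]
          exact ExecList.nil _
      | cons m2 rest2 =>
          obtain ⟨c', hx, -⟩ := execList_cons_inv h2
          exact absurd hx no_exec_empty
  | cons m1 rest1 ih =>
      intro ms2 st q w f1 f2 h1 h2
      obtain ⟨c1', hx1, hr1⟩ := execList_cons_inv h1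
      cases ms2 with
      | nil =>
          have hc2 := execList_nil_inv h2
          simp only [Config.mk.injEq] at hc2
          obtain ⟨hst, -, hw⟩ := hc2
          have hst' : st = [] := List.map_eq_nil_iff.mp hst
          subst hst' hw
          exact absurd hx1 no_exec_empty
      | cons m2 rest2 =>
          obtain ⟨c2', hx2, hr2⟩ := execList_cons_inv h2
          cases st with
          | nil =>
              cases hx1 with
              | @push _ _ r1 b x hrel1 hmem1 =>
                  cases hx2 with
                  | @push _ _ r2 b' x' hrel2 hmem2 =>
                      obtain ⟨ms, hms, hp1, hp2⟩ :=
                        ih rest2 [(b, q)] (r1, r2) x f1 f2 hr1 hr2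
                      refine ⟨.push q b (r1, r2) :: ms, ?_,
                        by simp [mproj1, hp1], by simp [mproj2, hp2]⟩
                      refine ExecList.cons (Exec.push ?_ ⟨hmem1, hmem2⟩) hms
                      rwa [topSym_sproj1] at hrel1
          | cons hd tl =>
              cases hx1 with
              | @push _ _ r1 b x hrel1 hmem1 =>
                  cases hx2 with
                  | @push _ _ r2 b' x' hrel2 hmem2 =>
                      obtain ⟨ms, hms, hp1, hp2⟩ :=
                        ih rest2 ((b, q) :: hd :: tl) (r1, r2) x f1 f2 hr1 hr2
                      refine ⟨.push q b (r1, r2) :: ms, ?_,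
                        by simp [mproj1, hp1], by simp [mproj2, hp2]⟩
                      refine ExecList.cons (Exec.push ?_ ⟨hmem1, hmem2⟩) hms
                      rwa [topSym_sproj1] at hrel1
                  | @shift _ _ _ r2 _ b' x' hrel2 hmem2 =>
                      exfalso
                      have hrel1' :
                          M.rel (some hd.1) (some b) = some PrecRel.lt := hrel1
                      rw [hrel1'] at hrel2
                      exact PrecRel.noConfusion (Option.some.inj hrel2)
                  | @pop _ _ _ r2 _ _ hrel2 hmem2 =>
                      exfalso
                      have hrel1' :
                          M.rel (some hd.1) (some b) = some PrecRel.lt := hrel1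
                      have hrel2' :
                          M.rel (some hd.1) (some b) = some PrecRel.gt := hrel2
                      rw [hrel1'] at hrel2'
                      exact PrecRel.noConfusion (Option.some.inj hrel2')
              | @shift _ _ _ r1 _ b x hrel1 hmem1 =>
                  cases hx2 with
                  | @push _ _ r2 b' x' hrel2 hmem2 =>
                      exfalso
                      have hrel2' :
                          M.rel (some hd.1) (some b) = some PrecRel.lt := hrel2
                      rw [hrel1] at hrel2'
                      exact PrecRel.noConfusion (Option.some.inj hrel2')
                  | @shift _ _ _ r2 _ b' x' hrel2 hmem2 =>
                      obtain ⟨ms, hms, hp1, hp2⟩ :=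
                        ih rest2 ((b, hd.2) :: tl) (r1, r2) x f1 f2 hr1 hr2
                      refine ⟨.shift q b (r1, r2) :: ms, ?_,
                        by simp [mproj1, hp1], by simp [mproj2, hp2]⟩
                      exact ExecList.cons (Exec.shift hrel1 ⟨hmem1, hmem2⟩) hms
                  | @pop _ _ _ r2 _ _ hrel2 hmem2 =>
                      exfalso
                      have hrel2' :
                          M.rel (some hd.1) (some b) = some PrecRel.gt := hrel2
                      rw [hrel1] at hrel2'
                      exact PrecRel.noConfusion (Option.some.inj hrel2')
              | @pop _ _ _ r1 _ _ hrel1 hmem1 =>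
                  cases hx2 with
                  | @push _ _ r2 b' x' hrel2 hmem2 =>
                      exfalso
                      have hrel1' :
                          M.rel (some hd.1) (some b') = some PrecRel.gt := hrel1
                      have hrel2' :
                          M.rel (some hd.1) (some b') = some PrecRel.lt := hrel2
                      rw [hrel1'] at hrel2'
                      exact PrecRel.noConfusion (Option.some.inj hrel2')
                  | @shift _ _ _ r2 _ b' x' hrel2 hmem2 =>
                      exfalso
                      have hrel1' :
                          M.rel (some hd.1) (some b') = some PrecRel.gt := hrel1
                      rw [hrel1'] at hrel2
                      exact PrecRel.noConfusion (Option.some.inj hrel2)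
                  | @pop _ _ _ r2 _ _ hrel2 hmem2 =>
                      obtain ⟨ms, hms, hp1, hp2⟩ :=
                        ih rest2 tl (r1, r2) w f1 f2 hr1 hr2
                      refine ⟨.pop q hd.2 (r1, r2) :: ms, ?_,
                        by simp [mproj1, hp1], by simp [mproj2, hp2]⟩
                      exact ExecList.cons (Exec.pop hrel1 ⟨hmem1, hmem2⟩) hms

lemma mproj_inj : ∀ {ms ms' : List (Move A (Q1 × Q2))},
    ms.map mproj1 = ms'.map mproj1 → ms.map mproj2 = ms'.map mproj2 → ms = ms' := by
  intro ms
  induction ms with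
  | nil =>
      intro ms' h1 _
      exact (List.map_eq_nil_iff.mp h1.symm).symm
  | cons m ms ih =>
      intro ms' h1 h2
      cases ms' with
      | nil => simp at h1
      | cons m' ms' =>
          simp only [List.map_cons, List.cons.injEq] at h1 h2
          obtain ⟨h1h, h1t⟩ := h1
          obtain ⟨h2h, h2t⟩ := h2
          rw [ih h1t h2t]
          congr 1
          cases m <;> cases m' <;>
            simp [mproj1, mproj2, Prod.ext_iff] at h1h h2h ⊢ <;> tauto

instance {Q : Type} [Finite A] [Finite Q] : Finite (Move A Q) := by
  refine Finite.of_surjective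
    (fun x : (Q × A × Q) ⊕ (Q × A × Q) ⊕ (Q × Q × Q) =>
      match x with
      | .inl (q, b, r) => Move.push q b r
      | .inr (.inl (q, b, r)) => Move.shift q b r
      | .inr (.inr (q, p, r)) => Move.pop q p r) ?_
  intro m
  cases m with
  | push q b r => exact ⟨.inl (q, b, r), rfl⟩
  | shift q b r => exact ⟨.inr (.inl (q, b, r)), rfl⟩
  | pop q p r => exact ⟨.inr (.inr (q, p, r)), rfl⟩

lemma execList_length_le {M : OPM A} {T : OPA A} {c c' : Config A T.Q}
    {ms : List (Move A T.Q)} (h : ExecList M T c ms c') :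
    ms.length + 2 * c'.input.length + c'.stack.length
      ≤ 2 * c.input.length + c.stack.length := by
  induction h with
  | nil => simp
  | cons h1 h2 ih =>
      cases h1 <;> simp at ih ⊢ <;> omega

lemma accRuns_finite {M : OPM A} [Finite A] (T : OPA A) (w : List A) :
    (AccRuns M T w).Finite := by
  haveI := T.fin
  have hsub : AccRuns M T w ⊆
      (Set.univ : Set T.Q) ×ˢ
        ({ms : List (Move A T.Q) | ms.length ≤ 2 * w.length} ×ˢ (Set.univ : Set T.Q)) := by
    rintro ⟨qI, ms, qF⟩ ⟨-, -, hex⟩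
    have hlen := execList_length_le hex
    simp only [List.length_nil] at hlen
    simp only [Set.mem_prod, Set.mem_univ, Set.mem_setOf_eq, true_and, and_true]
    omega
  exact (Set.finite_univ.prod ((List.finite_length_le _ _).prod Set.finite_univ)).subset hsub

lemma behavior_prod {M : OPM A} [Finite A] (W1 W2 : WOPA A K) (w : List A) :
    behavior M (prodWOPA W1 W2) w = behavior M W1 w * behavior M W2 w := by
  classical
  set P := prodWOPA W1 W2 with hP
  set e : (P.Q × List (Move A P.Q) × P.Q) →
      (W1.Q × List (Move A W1.Q) × W1.Q) × (W2.Q × List (Move A W2.Q) × W2.Q) :=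
    fun ρ => ((ρ.1.1, ρ.2.1.map mproj1, ρ.2.2.1), (ρ.1.2, ρ.2.1.map mproj2, ρ.2.2.2))
    with he
  have hbij : Set.BijOn e (AccRuns M P.toOPA w)
      ((AccRuns M W1.toOPA w) ×ˢ (AccRuns M W2.toOPA w)) := by
    refine ⟨?_, ?_, ?_⟩
    · rintro ⟨qI, ms, qF⟩ ⟨hI, hF, hex⟩
      exact ⟨⟨hI.1, hF.1, split_run1 hex⟩, ⟨hI.2, hF.2, split_run2 hex⟩⟩
    · rintro ⟨qI, ms, qF⟩ - ⟨qI', ms', qF'⟩ - heq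
      simp only [he, Prod.mk.injEq] at heq
      obtain ⟨⟨hI1, hm1, hF1⟩, ⟨hI2, hm2, hF2⟩⟩ := heq
      exact Prod.ext (Prod.ext hI1 hI2)
        (Prod.ext (mproj_inj hm1 hm2) (Prod.ext hF1 hF2))
    · rintro ⟨⟨qI1, ms1, qF1⟩, ⟨qI2, ms2, qF2⟩⟩ ⟨⟨hI1, hF1, hex1⟩, ⟨hI2, hF2, hex2⟩⟩
      obtain ⟨ms, hms, hp1, hp2⟩ :=
        zip_run W1 W2 ms1 ms2 [] (qI1, qI2) w qF1 qF2 hex1 hex2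
      exact ⟨((qI1, qI2), ms, (qF1, qF2)), ⟨⟨hI1, hI2⟩, ⟨hF1, hF2⟩, hms⟩,
        by simp [he, hp1, hp2]⟩
  have h1 := accRuns_finite (M := M) W1.toOPA w
  have h2 := accRuns_finite (M := M) W2.toOPA w
  calc behavior M P w
      = ∑ᶠ p ∈ (AccRuns M W1.toOPA w) ×ˢ (AccRuns M W2.toOPA w),
          (p.1.2.1.map (moveWt W1)).prod * (p.2.2.1.map (moveWt W2)).prod := by
        refine finsum_mem_eq_of_bijOn e hbij ?_
        rintro ⟨qI, ms, qF⟩ -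
        exact wt_split W1 W2 ms
    _ = behavior M W1 w * behavior M W2 w := by
        rw [behavior, behavior, ← h1.coe_toFinset, ← h2.coe_toFinset,
          ← Finset.coe_product, finsum_mem_coe_finset, finsum_mem_coe_finset,
          finsum_mem_coe_finset, Finset.sum_mul_sum, ← Finset.sum_product']

end Hadamard

/-- Over a commutative semiring, the pointwise (Hadamard) product of two regular
(resp. strictly regular) series is regular (resp. strictly regular). -/
theorem hadamard_regular {A K : Type} [Fintype A] [CommSemiring K] (M : OPM A)
    (S T : List A → K) :
    (Regular M S → Regular M T → Regular M (fun w => S w * T w)) ∧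
    (StrictlyRegular M S → StrictlyRegular M T →
      StrictlyRegular M (fun w => S w * T w)) := by
  constructor
  · rintro ⟨W1, h1⟩ ⟨W2, h2⟩
    exact ⟨prodWOPA W1 W2, fun w hw => by show S w * T w = _; rw [h1 w hw, h2 w hw, behavior_prod]⟩
  · rintro ⟨W1, hr1, h1⟩ ⟨W2, hr2, h2⟩
    exact ⟨prodWOPA W1 W2, prod_restricted hr1 hr2,
      fun w hw => by show S w * T w = _; rw [h1 w hw, h2 w hw, behavior_prod]⟩
end WOP
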